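/- Let $i_1,i_2\in\{1,\dots,i(n)\}$ with $i_1<i_2$, and write $e_{i_1}=(j_1,k_1)$, $e_{i_2}=(j_2,k_2)$. Then $\Psi_{n,i_1}(x_{i_2})=(r_n|_{M_n})^{-1}\big(r_{n-1}(d_{k_2})\oplus\big(d_{k_2}|_{\Delta_n}+T_{M(i_1,i_2)}(y_{j_2})\big)\big)$, where $M(i_1,i_2)=m(j_2,j_1)$ if $k_2\le k_1$ and $M(i_1,i_2)=m(j_2,j_1-1)$ if $k_2>k_1$ (these values are well defined since $j_1<j_2$ when $k_2\le k_1$ and $j_1-1<j_2$ when $k_2>k_1$). -/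

import Mathlib

open Set

noncomputable section

variable {Γ : Type*} [TopologicalSpace Γ] [DiscreteTopology Γ]

/-- `ℓ∞(Γ)`: the Banach space of bounded real functions on `Γ`
(carrying the discrete topology, so that boundedness is the only constraint). -/
abbrev Linf (Γ : Type*) [TopologicalSpace Γ] [DiscreteTopology Γ] : Type _ :=
  BoundedContinuousFunction Γ ℝ

/-- The entire part of a real number, toward `0`: `[r] = sign(r)⌊|r|⌋`. -/
def ent (r : ℝ) : ℝ := Real.sign r * ⌊|r|⌋

lemma abs_ent_le (r : ℝ) : |ent r| ≤ |r| := by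
  have hsign : |Real.sign r| ≤ 1 := by
    rcases lt_trichotomy r 0 with h | h | h
    · rw [Real.sign_of_neg h]; norm_num
    · rw [h, Real.sign_zero]; norm_num
    · rw [Real.sign_of_pos h]; norm_num
  have hfl : |(⌊|r|⌋ : ℝ)| ≤ |r| := by
    rw [abs_of_nonneg (by exact_mod_cast Int.floor_nonneg.mpr (abs_nonneg r))]
    exact Int.floor_le _
  calc |ent r| = |Real.sign r| * |(⌊|r|⌋ : ℝ)| := abs_mul _ _
    _ ≤ 1 * |r| := mul_le_mul hsign hfl (abs_nonneg _) zero_le_one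
    _ = |r| := one_mul _

/-- The coordinatewise quantization `f : ℓ∞(S) → ℓ∞(S)`, `f(x)(γ) = [x(γ)]`. -/
def quant (x : Linf Γ) : Linf Γ :=
  BoundedContinuousFunction.ofNormedAddCommGroup (fun γ => ent (x γ))
    continuous_of_discreteTopology ‖x‖ (fun γ => by
      rw [Real.norm_eq_abs]
      exact (abs_ent_le (x γ)).trans (by simpa using x.norm_coe_le_norm γ))

/-- Scalar truncation at level `s`. -/
def truncFun (s t : ℝ) : ℝ := if |t| ≤ s then t else s * t / |t|

lemma abs_truncFun_le (s t : ℝ) : |truncFun s t| ≤ max |s| |t| := by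
  unfold truncFun
  split_ifs with h
  · exact le_max_right _ _
  · by_cases ht : t = 0
    · simp [ht]
    · have hst : abs (s * t / |t|) = |s| := by
        rw [abs_div, abs_mul, abs_abs, mul_div_assoc, div_self (abs_ne_zero.mpr ht), mul_one]
      rw [hst]; exact le_max_left _ _

/-- The truncation of radius `s`: `T_s(x)(γ) = x(γ)` if `|x(γ)| ≤ s`,
and `= s·x(γ)/|x(γ)|` otherwise. -/
def trunc (s : ℝ) (x : Linf Γ) : Linf Γ :=
  BoundedContinuousFunction.ofNormedAddCommGroup (fun γ => truncFun s (x γ))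
    continuous_of_discreteTopology (max |s| ‖x‖) (fun γ => by
      rw [Real.norm_eq_abs]
      exact (abs_truncFun_le s (x γ)).trans
        (max_le_max le_rfl (by simpa using x.norm_coe_le_norm γ)))

/-- The restriction operator `r_S : ℓ∞(Γ) → ℓ∞(S)`, where `ℓ∞(S)` is identified
isometrically with the subspace of `ℓ∞(Γ)` of functions vanishing off `S`. -/
def restr (S : Set Γ) (x : Linf Γ) : Linf Γ :=
  BoundedContinuousFunction.ofNormedAddCommGroup (S.indicator x)
    continuous_of_discreteTopology ‖x‖ (fun γ => by
      rw [Real.norm_eq_abs]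
      by_cases h : γ ∈ S
      · rw [Set.indicator_of_mem h]
        simpa using x.norm_coe_le_norm γ
      · rw [Set.indicator_of_notMem h]
        simp)

/-- The ball `s·B_{ℓ∞(S)}`, viewed inside `ℓ∞(Γ)`: functions supported on `S`
of norm at most `s`. -/
def suppBall (S : Set Γ) (s : ℝ) : Set (Linf Γ) :=
  {x | (∀ γ ∉ S, x γ = 0) ∧ ‖x‖ ≤ s}

/-- `chain T a b = T (a+1) ∘ ⋯ ∘ T b` (the identity if `b ≤ a`). -/
def chain {α : Type*} (T : ℕ → α → α) (a b : ℕ) : α → α :=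
  Nat.rec id (fun k ih => ih ∘ T (a + k + 1)) (b - a)

/-- Bourgain–Delbaen data on `Γ`: a strictly increasing sequence of nonempty finite
sets `Γs n` (for `n ≥ 1`) with union `Γ`, together with compatible bounded linear
extension operators `i n : ℓ∞(Γ_n) → ℓ∞(Γ)` (realized as operators on `ℓ∞(Γ)`
factoring through the restriction `restr (Γs n)`), with norms bounded by the
positive integer `lam`. -/
structure BD (Γ : Type*) [TopologicalSpace Γ] [DiscreteTopology Γ] where
  Γs : ℕ → Set Γ
  lam : ℕ
  i : ℕ → Linf Γ →L[ℝ] Linf Γ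
  one_le_lam : 1 ≤ lam
  finite : ∀ n, 1 ≤ n → (Γs n).Finite
  nonempty : ∀ n, 1 ≤ n → (Γs n).Nonempty
  ssubset : ∀ n, 1 ≤ n → Γs n ⊂ Γs (n + 1)
  iUnion_eq : ⋃ n ∈ {k : ℕ | 1 ≤ k}, Γs n = Set.univ
  extension : ∀ n, 1 ≤ n → ∀ x : Linf Γ, ∀ γ ∈ Γs n, i n x γ = x γ
  factor : ∀ n, 1 ≤ n → ∀ x : Linf Γ, i n (restr (Γs n) x) = i n x
  compatible : ∀ n m, 1 ≤ n → n < m → ∀ x : Linf Γ, i m (restr (Γs m) (i n x)) = i n x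
  norm_i_le : ∀ n, 1 ≤ n → ‖i n‖ ≤ (lam : ℝ)

namespace BD

/-- `s n = λ^n`. -/
def s (B : BD Γ) (n : ℕ) : ℝ := (B.lam : ℝ) ^ n

/-- The sets `M_n` (with `M_0 = ∅`):
`M_n = M_{n-1} ∪ (f ∘ i_n)(f(s_n B_{ℓ∞(Γ_n)}) \ r_n(M_{n-1}))`. -/
def M (B : BD Γ) : ℕ → Set (Linf Γ)
  | 0 => ∅
  | n + 1 =>
      M B n ∪
        (fun z => quant (B.i (n + 1) z)) ''
          (quant '' suppBall (B.Γs (n + 1)) (B.s (n + 1)) \ restr (B.Γs (n + 1)) '' M B n)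

/-- `M = ⋃ n, M_n`. -/
def Mtot (B : BD Γ) : Set (Linf Γ) := ⋃ n, B.M n

/-- `C_n = (f ∘ i_{n+1} ∘ f ∘ T_{s_{n+1}} ∘ r_{n+1} ∘ i_n)
(f(s_{n+1}B_{ℓ∞(Γ_n)}) \ f(s_n B_{ℓ∞(Γ_n)}))`. -/
def C (B : BD Γ) (n : ℕ) : Set (Linf Γ) :=
  (fun z => quant (B.i (n + 1) (quant (trunc (B.s (n + 1)) (restr (B.Γs (n + 1)) (B.i n z)))))) ''
    (quant '' suppBall (B.Γs n) (B.s (n + 1)) \ quant '' suppBall (B.Γs n) (B.s n))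

/-- `D_n = M_n ∪ C_n`. -/
def D (B : BD Γ) (n : ℕ) : Set (Linf Γ) := B.M n ∪ B.C n

end BD

/-! ### Auxiliary lemmas -/

section Aux

lemma quant_apply (x : Linf Γ) (γ : Γ) : quant x γ = ent (x γ) := rfl

lemma trunc_apply (s : ℝ) (x : Linf Γ) (γ : Γ) : trunc s x γ = truncFun s (x γ) := rfl

lemma restr_apply (S : Set Γ) (x : Linf Γ) (γ : Γ) : restr S x γ = S.indicator x γ := rfl

lemma restr_apply_of_mem {S : Set Γ} (x : Linf Γ) {γ : Γ} (h : γ ∈ S) :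
    restr S x γ = x γ := by
  rw [restr_apply, Set.indicator_of_mem h]

lemma restr_apply_of_not_mem {S : Set Γ} (x : Linf Γ) {γ : Γ} (h : γ ∉ S) :
    restr S x γ = 0 := by
  rw [restr_apply, Set.indicator_of_notMem h]

lemma ent_zero : ent 0 = 0 := by simp [ent]

lemma ent_intCast (z : ℤ) : ent (z : ℝ) = (z : ℝ) := by
  rcases lt_trichotomy (z : ℝ) 0 with h | h | h
  · rw [ent, Real.sign_of_neg h, abs_of_neg h]
    rw [show -(z:ℝ) = ((-z : ℤ) : ℝ) by push_cast; ring, Int.floor_intCast]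
    push_cast; ring
  · rw [ent, h, Real.sign_zero, zero_mul]
  · rw [ent, Real.sign_of_pos h, abs_of_pos h, Int.floor_intCast, one_mul]

lemma ent_isInt (r : ℝ) : ∃ z : ℤ, ent r = (z : ℝ) := by
  rcases lt_trichotomy r 0 with h | h | h
  · exact ⟨-⌊|r|⌋, by rw [ent, Real.sign_of_neg h]; push_cast; ring⟩
  · exact ⟨0, by rw [h, ent_zero]; norm_num⟩
  · exact ⟨⌊|r|⌋, by rw [ent, Real.sign_of_pos h, one_mul]⟩

/-- Integer-valued bounded functions. -/
def IsIntF (w : Linf Γ) : Prop := ∀ γ, ∃ z : ℤ, w γ = (z : ℝ)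

lemma isIntF_quant (x : Linf Γ) : IsIntF (quant x) := fun γ => ent_isInt (x γ)

lemma quant_eq_self {w : Linf Γ} (h : IsIntF w) : quant w = w := by
  apply BoundedContinuousFunction.ext
  intro γ
  obtain ⟨z, hz⟩ := h γ
  rw [quant_apply, hz, ent_intCast]

lemma isIntF_add {u v : Linf Γ} (hu : IsIntF u) (hv : IsIntF v) : IsIntF (u + v) := by
  intro γ
  obtain ⟨a, ha⟩ := hu γ
  obtain ⟨b, hb⟩ := hv γ
  exact ⟨a + b, by rw [BoundedContinuousFunction.add_apply, ha, hb]; push_cast; ring⟩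

lemma isIntF_restr {u : Linf Γ} (S : Set Γ) (hu : IsIntF u) : IsIntF (restr S u) := by
  intro γ
  by_cases h : γ ∈ S
  · obtain ⟨a, ha⟩ := hu γ
    exact ⟨a, by rw [restr_apply_of_mem _ h, ha]⟩
  · exact ⟨0, by rw [restr_apply_of_not_mem _ h]; norm_num⟩

/-- The norm of an integer-valued element of `ℓ∞` is a natural number. -/
lemma isIntF_norm {w : Linf Γ} (h : IsIntF w) : ∃ k : ℕ, ‖w‖ = (k : ℝ) := by
  refine ⟨⌊‖w‖⌋.toNat, le_antisymm ?_ ?_⟩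
  · apply (BoundedContinuousFunction.norm_le (by positivity)).mpr
    intro γ
    obtain ⟨z, hz⟩ := h γ
    rw [Real.norm_eq_abs, hz, ← Int.cast_abs]
    have h1 : ((|z| : ℤ) : ℝ) ≤ ‖w‖ := by
      rw [Int.cast_abs, ← hz, ← Real.norm_eq_abs]
      exact w.norm_coe_le_norm γ
    have h2 : |z| ≤ ⌊‖w‖⌋ := Int.le_floor.mpr h1
    calc ((|z| : ℤ) : ℝ) ≤ (⌊‖w‖⌋ : ℝ) := by exact_mod_cast h2
      _ = (⌊‖w‖⌋.toNat : ℝ) := by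
          exact_mod_cast (congrArg (fun z : ℤ => (z : ℝ))
            (Int.toNat_of_nonneg (Int.floor_nonneg.mpr (norm_nonneg w)))).symm
  · calc (⌊‖w‖⌋.toNat : ℝ) = (⌊‖w‖⌋ : ℝ) := by
          exact_mod_cast congrArg (fun z : ℤ => (z : ℝ))
            (Int.toNat_of_nonneg (Int.floor_nonneg.mpr (norm_nonneg w)))
      _ ≤ ‖w‖ := Int.floor_le _

lemma truncFun_zero (s : ℝ) : truncFun s 0 = 0 := by
  unfold truncFun
  split_ifs <;> simp

lemma truncFun_of_abs_le {s t : ℝ} (h : |t| ≤ s) : truncFun s t = t := by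
  unfold truncFun
  exact if_pos h

lemma abs_truncFun_le_level {s : ℝ} (hs : 0 ≤ s) (t : ℝ) : |truncFun s t| ≤ s := by
  unfold truncFun
  split_ifs with h
  · exact h
  · by_cases ht : t = 0
    · simp [ht, hs]
    · have habs : abs (s * t / |t|) = |s| := by
        rw [abs_div, abs_mul, abs_abs, mul_div_assoc, div_self (abs_ne_zero.mpr ht), mul_one]
      rw [habs, abs_of_nonneg hs]

lemma truncFun_isInt {s t : ℝ} (hs : ∃ a : ℤ, s = (a : ℝ)) (ht : ∃ b : ℤ, t = (b : ℝ)) :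
    ∃ c : ℤ, truncFun s t = (c : ℝ) := by
  obtain ⟨a, rfl⟩ := hs
  obtain ⟨b, rfl⟩ := ht
  unfold truncFun
  split_ifs with h
  · exact ⟨b, rfl⟩
  · by_cases hb : (b : ℝ) = 0
    · exact ⟨0, by rw [hb]; norm_num⟩
    · rcases lt_or_gt_of_ne hb with hb' | hb'
      · exact ⟨-a, by
          rw [abs_of_neg hb', div_neg, mul_div_assoc, div_self hb, mul_one]; push_cast; ring⟩
      · exact ⟨a, by rw [abs_of_pos hb', mul_div_assoc, div_self hb, mul_one]⟩

lemma abs_add_truncFun_le {s : ℝ} (hs : 0 ≤ s) (a t : ℝ) :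
    |a + truncFun s t| ≤ max |a| |a + t| := by
  unfold truncFun
  split_ifs with h
  · exact le_max_right _ _
  · push_neg at h
    have ht : t ≠ 0 := fun h0 => by simp [h0] at h; linarith
    have htpos : 0 < |t| := abs_pos.mpr ht
    set θ : ℝ := s / |t| with hθ
    have hθ0 : 0 ≤ θ := div_nonneg hs htpos.le
    have hθ1 : θ ≤ 1 := by
      rw [hθ, div_le_one htpos]
      exact h.le
    have key : a + s * t / |t| = (1 - θ) * a + θ * (a + t) := by
      field_simp [hθ]
      rw [hθ]; field_simp
      ring
    rw [key]
    calc |(1 - θ) * a + θ * (a + t)| ≤ |(1 - θ) * a| + |θ * (a + t)| := abs_add_le _ _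
      _ = (1 - θ) * |a| + θ * |a + t| := by
          rw [abs_mul, abs_mul, abs_of_nonneg (by linarith), abs_of_nonneg hθ0]
      _ ≤ (1 - θ) * max |a| |a + t| + θ * max |a| |a + t| := by
          gcongr
          · exact le_max_left _ _
          · exact le_max_right _ _
      _ = max |a| |a + t| := by ring

lemma restr_restr_of_subset {S T : Set Γ} (h : S ⊆ T) (x : Linf Γ) :
    restr S (restr T x) = restr S x := by
  apply BoundedContinuousFunction.ext
  intro γ
  by_cases hγ : γ ∈ S
  · rw [restr_apply_of_mem _ hγ, restr_apply_of_mem _ hγ, restr_apply_of_mem _ (h hγ)]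
  · rw [restr_apply_of_not_mem _ hγ, restr_apply_of_not_mem _ hγ]

lemma norm_restr_le {S : Set Γ} {x : Linf Γ} {c : ℝ} (hc : 0 ≤ c)
    (h : ∀ γ ∈ S, |x γ| ≤ c) : ‖restr S x‖ ≤ c := by
  apply (BoundedContinuousFunction.norm_le hc).mpr
  intro γ
  rw [Real.norm_eq_abs]
  by_cases hγ : γ ∈ S
  · rw [restr_apply_of_mem _ hγ]; exact h γ hγ
  · rw [restr_apply_of_not_mem _ hγ]; simpa using hc

lemma mem_quant_suppBall {S : Set Γ} {s : ℝ} {g : Linf Γ} (hint : IsIntF g)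
    (hsupp : ∀ γ ∉ S, g γ = 0) (hnorm : ‖g‖ ≤ s) :
    g ∈ quant '' suppBall S s :=
  ⟨g, ⟨hsupp, hnorm⟩, quant_eq_self hint⟩

lemma quant_suppBall_prop {S : Set Γ} {s : ℝ} {g : Linf Γ}
    (h : g ∈ quant '' suppBall S s) :
    IsIntF g ∧ (∀ γ ∉ S, g γ = 0) ∧ (∀ γ, |g γ| ≤ s) := by
  obtain ⟨v, ⟨hsupp, hnorm⟩, rfl⟩ := h
  refine ⟨isIntF_quant v, fun γ hγ => ?_, fun γ => ?_⟩
  · rw [quant_apply, hsupp γ hγ, ent_zero]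
  · rw [quant_apply]
    refine (abs_ent_le (v γ)).trans (le_trans ?_ hnorm)
    simpa using v.norm_coe_le_norm γ

end Aux

section Chain

variable {α : Type*}

/-- Explicit recursor for `chain`. -/
def chainR (f : ℕ → α → α) (a : ℕ) : ℕ → α → α
  | 0 => id
  | m + 1 => chainR f a m ∘ f (a + m + 1)

lemma natrec_eq_chainR (f : ℕ → α → α) (a : ℕ) :
    ∀ m, (Nat.rec id (fun k ih => ih ∘ f (a + k + 1)) m : α → α) = chainR f a m
  | 0 => rfl
  | m + 1 => by
      show (Nat.rec id (fun k ih => ih ∘ f (a + k + 1)) m : α → α) ∘ f (a + m + 1) = _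
      rw [natrec_eq_chainR f a m]
      rfl

lemma chain_eq_chainR (f : ℕ → α → α) (a b : ℕ) : chain f a b = chainR f a (b - a) :=
  natrec_eq_chainR f a (b - a)

lemma chainR_id {f : ℕ → α → α} {a : ℕ} {z : α} :
    ∀ m, (∀ t, a < t → t ≤ a + m → f t z = z) → chainR f a m z = z
  | 0, _ => rfl
  | m + 1, h => by
      show chainR f a m (f (a + m + 1) z) = z
      rw [h (a + m + 1) (by omega) (by omega)]
      exact chainR_id m (fun t ht1 ht2 => h t ht1 (by omega))

lemma chain_id (f : ℕ → α → α) (a b : ℕ) (z : α)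
    (h : ∀ t, a < t → t ≤ b → f t z = z) : chain f a b z = z := by
  rw [chain_eq_chainR]
  rcases le_or_gt a b with hab | hab
  · exact chainR_id _ (fun t ht1 ht2 => h t ht1 (by omega))
  · have hz : b - a = 0 := by omega
    rw [hz]
    rfl

lemma chainR_succ (f : ℕ → α → α) (a : ℕ) :
    ∀ m, chainR f a (m + 1) = f (a + 1) ∘ chainR f (a + 1) m
  | 0 => rfl
  | m + 1 => by
      show chainR f a (m + 1) ∘ f (a + (m + 1) + 1) = _
      rw [chainR_succ f a m]
      have harith : a + (m + 1) + 1 = (a + 1) + m + 1 := by omega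
      rw [harith]
      rfl

lemma chain_succ_left (f : ℕ → α → α) {a b : ℕ} (h : a < b) :
    chain f a b = f (a + 1) ∘ chain f (a + 1) b := by
  rw [chain_eq_chainR, chain_eq_chainR]
  have h1 : b - a = (b - (a + 1)) + 1 := by omega
  rw [h1, chainR_succ]

end Chain

namespace BD

variable (B : BD Γ)

lemma one_le_lamR : (1 : ℝ) ≤ (B.lam : ℝ) := by exact_mod_cast B.one_le_lam

lemma one_le_s (n : ℕ) : (1 : ℝ) ≤ B.s n := one_le_pow₀ B.one_le_lamR

lemma s_nonneg (n : ℕ) : (0 : ℝ) ≤ B.s n := le_trans zero_le_one (B.one_le_s n)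

lemma s_mono {a b : ℕ} (h : a ≤ b) : B.s a ≤ B.s b :=
  pow_le_pow_right₀ B.one_le_lamR h

lemma Γs_subset {a b : ℕ} (ha : 1 ≤ a) (hab : a ≤ b) : B.Γs a ⊆ B.Γs b := by
  induction b, hab using Nat.le_induction with
  | base => exact subset_rfl
  | succ b hb ih => exact ih.trans (B.ssubset b (le_trans ha hb)).subset

/-- The set of elements added to `M` at stage `m`. -/
def Newpart (m : ℕ) : Set (Linf Γ) :=
  (fun z => quant (B.i m z)) ''
    (quant '' suppBall (B.Γs m) (B.s m) \ restr (B.Γs m) '' B.M (m - 1))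

lemma M_succ_eq (N : ℕ) : B.M (N + 1) = B.M N ∪ B.Newpart (N + 1) := rfl

lemma M_mono {a b : ℕ} (h : a ≤ b) : B.M a ⊆ B.M b := by
  induction b, h using Nat.le_induction with
  | base => exact subset_rfl
  | succ b hb ih =>
      refine ih.trans ?_
      rw [M_succ_eq]
      exact Set.subset_union_left

lemma exists_stage {N : ℕ} {u : Linf Γ} (hu : u ∈ B.M N) :
    ∃ m, 1 ≤ m ∧ m ≤ N ∧ u ∈ B.Newpart m := by
  induction N with
  | zero => exact absurd hu (Set.notMem_empty u)
  | succ N ih =>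
      rw [M_succ_eq] at hu
      rcases hu with hu | hu
      · obtain ⟨m, h1, h2, h3⟩ := ih hu
        exact ⟨m, h1, h2.trans (Nat.le_succ N), h3⟩
      · exact ⟨N + 1, by omega, le_rfl, hu⟩

lemma newpart_subset {m : ℕ} (hm : 1 ≤ m) : B.Newpart m ⊆ B.M m := by
  have h : m = (m - 1) + 1 := by omega
  rw [h, M_succ_eq]
  exact Set.subset_union_right

lemma newpart_spec {m : ℕ} {u : Linf Γ} (hm : 1 ≤ m) (hu : u ∈ B.Newpart m) :
    IsIntF u ∧ restr (B.Γs m) u ∉ restr (B.Γs m) '' B.M (m - 1) ∧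
    u = quant (B.i m (restr (B.Γs m) u)) ∧
    (∀ γ, |u γ| ≤ (B.lam : ℝ) ^ (m + 1)) ∧
    (∀ γ ∈ B.Γs m, |u γ| ≤ B.s m) := by
  obtain ⟨z, ⟨hz1, hz2⟩, rfl⟩ := hu
  obtain ⟨hzint, hzsupp, hzbd⟩ := quant_suppBall_prop hz1
  have hznorm : ‖z‖ ≤ B.s m := by
    apply (BoundedContinuousFunction.norm_le (B.s_nonneg m)).mpr
    intro γ
    rw [Real.norm_eq_abs]
    exact hzbd γ
  have honΓ : ∀ γ ∈ B.Γs m, quant (B.i m z) γ = z γ := by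
    intro γ hγ
    rw [quant_apply, B.extension m hm z γ hγ]
    obtain ⟨c, hc⟩ := hzint γ
    rw [hc, ent_intCast]
  have hre : restr (B.Γs m) (quant (B.i m z)) = z := by
    apply BoundedContinuousFunction.ext
    intro γ
    by_cases hγ : γ ∈ B.Γs m
    · rw [restr_apply_of_mem _ hγ, honΓ γ hγ]
    · rw [restr_apply_of_not_mem _ hγ]
      exact (hzsupp γ hγ).symm
  refine ⟨isIntF_quant _, ?_, ?_, ?_, ?_⟩
  · rw [hre]; exact hz2
  · rw [hre]
  · intro γ
    rw [quant_apply]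
    refine (abs_ent_le _).trans ?_
    have h1 : |(B.i m z) γ| ≤ ‖B.i m z‖ := by
      simpa using (B.i m z).norm_coe_le_norm γ
    refine h1.trans (((B.i m).le_opNorm z).trans ?_)
    calc ‖B.i m‖ * ‖z‖ ≤ (B.lam : ℝ) * B.s m :=
          mul_le_mul (B.norm_i_le m hm) hznorm (norm_nonneg z)
            (le_trans zero_le_one B.one_le_lamR)
      _ = (B.lam : ℝ) ^ (m + 1) := by rw [BD.s]; ring
  · intro γ hγ
    rw [honΓ γ hγ]
    exact hzbd γ

lemma C_spec {n : ℕ} {v : Linf Γ} (hn : 2 ≤ n) (hv : v ∈ B.C (n - 1)) :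
    IsIntF v ∧ v = quant (B.i n (restr (B.Γs n) v)) ∧
    (∀ γ ∈ B.Γs n, |v γ| ≤ B.s n) ∧ B.s (n - 1) < ‖restr (B.Γs (n - 1)) v‖ := by
  have hn1 : 1 ≤ n - 1 := by omega
  have hE : n - 1 + 1 = n := by omega
  obtain ⟨z, hz, hvz⟩ := hv
  rw [hE] at hz hvz
  obtain ⟨hz1, hz2⟩ := hz
  obtain ⟨hzint, hzsupp, hzbd⟩ := quant_suppBall_prop hz1
  set w₀ : Linf Γ := quant (trunc (B.s n) (restr (B.Γs n) (B.i (n - 1) z))) with hw₀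
  have hw₀int : IsIntF w₀ := isIntF_quant _
  have hw₀supp : ∀ γ ∉ B.Γs n, w₀ γ = 0 := by
    intro γ hγ
    rw [hw₀, quant_apply, trunc_apply, restr_apply_of_not_mem _ hγ, truncFun_zero, ent_zero]
  have hw₀bd : ∀ γ, |w₀ γ| ≤ B.s n := by
    intro γ
    rw [hw₀, quant_apply]
    exact (abs_ent_le _).trans (abs_truncFun_le_level (B.s_nonneg n) _)
  have honΓ : ∀ γ ∈ B.Γs n, v γ = w₀ γ := by
    intro γ hγ
    rw [← hvz, quant_apply, B.extension n (by omega) w₀ γ hγ]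
    obtain ⟨c, hc⟩ := hw₀int γ
    rw [hc, ent_intCast]
  have hre : restr (B.Γs n) v = w₀ := by
    apply BoundedContinuousFunction.ext
    intro γ
    by_cases hγ : γ ∈ B.Γs n
    · rw [restr_apply_of_mem _ hγ, honΓ γ hγ]
    · rw [restr_apply_of_not_mem _ hγ]
      exact (hw₀supp γ hγ).symm
  have hzon : ∀ γ ∈ B.Γs (n - 1), v γ = z γ := by
    intro γ hγ
    have hγn : γ ∈ B.Γs n := B.Γs_subset hn1 (by omega) hγ
    rw [honΓ γ hγn, hw₀, quant_apply, trunc_apply, restr_apply_of_mem _ hγn,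
      B.extension (n - 1) hn1 z γ hγ, truncFun_of_abs_le (hzbd γ)]
    obtain ⟨c, hc⟩ := hzint γ
    rw [hc, ent_intCast]
  have hrez : restr (B.Γs (n - 1)) v = z := by
    apply BoundedContinuousFunction.ext
    intro γ
    by_cases hγ : γ ∈ B.Γs (n - 1)
    · rw [restr_apply_of_mem _ hγ, hzon γ hγ]
    · rw [restr_apply_of_not_mem _ hγ]
      exact (hzsupp γ hγ).symm
  refine ⟨?_, ?_, ?_, ?_⟩
  · rw [← hvz]; exact isIntF_quant _
  · rw [hre, ← hvz]
  · intro γ hγ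
    rw [honΓ γ hγ]
    exact hw₀bd γ
  · rw [hrez]
    by_contra hcon
    push_neg at hcon
    exact hz2 (mem_quant_suppBall hzint hzsupp hcon)

/-- Restriction to `Γs n` is injective on `M n ∪ C (n-1)`. -/
lemma restr_inj {n : ℕ} (hn : 2 ≤ n) {u u' : Linf Γ}
    (hu : u ∈ B.M n ∪ B.C (n - 1)) (hu' : u' ∈ B.M n ∪ B.C (n - 1))
    (h : restr (B.Γs n) u = restr (B.Γs n) u') : u = u' := by
  have hn1 : 1 ≤ n - 1 := by omega
  -- M-M case, ordered
  have hMM : ∀ {w w' : Linf Γ} {m m' : ℕ}, 1 ≤ m → m ≤ m' → m' ≤ n →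
      w ∈ B.Newpart m → w' ∈ B.Newpart m' →
      restr (B.Γs n) w = restr (B.Γs n) w' → w = w' := by
    intro w w' m m' hm hmm' hm'n hw hw'
    intro hrest
    have hm' : 1 ≤ m' := le_trans hm hmm'
    obtain ⟨_, hwnot, hwrep, _, _⟩ := B.newpart_spec hm hw
    obtain ⟨_, hw'not, hw'rep, _, _⟩ := B.newpart_spec hm' hw'
    have hsub : B.Γs m' ⊆ B.Γs n := B.Γs_subset hm' hm'n
    have hrm' : restr (B.Γs m') w = restr (B.Γs m') w' := by
      rw [← restr_restr_of_subset hsub w, ← restr_restr_of_subset hsub w', hrest]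
    rcases eq_or_lt_of_le hmm' with rfl | hlt
    · rw [hwrep, hrm', ← hw'rep]
    · exfalso
      apply hw'not
      rw [← hrm']
      exact ⟨w, B.M_mono (by omega) (B.newpart_subset hm hw), rfl⟩
  -- M-C case
  have hMC : ∀ {w v : Linf Γ} {m : ℕ}, 1 ≤ m → m ≤ n →
      w ∈ B.Newpart m → v ∈ B.C (n - 1) →
      restr (B.Γs n) w = restr (B.Γs n) v → w = v := by
    intro w v m hm hmn hw hv hrest
    obtain ⟨_, _, hwrep, hwbd, hwbd'⟩ := B.newpart_spec hm hw
    obtain ⟨_, hvrep, _, hvnorm⟩ := B.C_spec hn hv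
    rcases eq_or_lt_of_le hmn with rfl | hlt
    · rw [hwrep, hrest, ← hvrep]
    · exfalso
      have hsub : B.Γs (n - 1) ⊆ B.Γs n := B.Γs_subset hn1 (by omega)
      have hr1 : restr (B.Γs (n - 1)) w = restr (B.Γs (n - 1)) v := by
        rw [← restr_restr_of_subset hsub w, ← restr_restr_of_subset hsub v, hrest]
      have hbd : ∀ γ ∈ B.Γs (n - 1), |w γ| ≤ B.s (n - 1) := by
        intro γ hγ
        rcases eq_or_lt_of_le (show m ≤ n - 1 by omega) with rfl | hlt2
        · exact hwbd' γ hγ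
        · refine (hwbd γ).trans ?_
          rw [BD.s]
          exact pow_le_pow_right₀ B.one_le_lamR (by omega)
      have : ‖restr (B.Γs (n - 1)) w‖ ≤ B.s (n - 1) :=
        norm_restr_le (B.s_nonneg _) hbd
      rw [hr1] at this
      exact absurd this (not_le.mpr hvnorm)
  rcases hu with hu | hu
  · obtain ⟨m, hm1, hmn, hw⟩ := B.exists_stage hu
    rcases hu' with hu' | hu'
    · obtain ⟨m', hm'1, hm'n, hw'⟩ := B.exists_stage hu'
      rcases le_total m m' with hle | hle
      · exact hMM hm1 hle hm'n hw hw' h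
      · exact (hMM hm'1 hle hmn hw' hw h.symm).symm
    · exact hMC hm1 hmn hw hu' h
  · rcases hu' with hu' | hu'
    · obtain ⟨m, hm1, hmn, hw⟩ := B.exists_stage hu'
      exact (hMC hm1 hmn hw hu h.symm).symm
    · obtain ⟨_, hrep, _, _⟩ := B.C_spec hn hu
      obtain ⟨_, hrep', _, _⟩ := B.C_spec hn hu'
      rw [hrep, h, ← hrep']

lemma D_subset_MC {n : ℕ} (hn : 2 ≤ n) : B.D (n - 1) ⊆ B.M n ∪ B.C (n - 1) := by
  intro v hv
  rcases hv with hv | hv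
  · exact Or.inl (B.M_mono (by omega) hv)
  · exact Or.inr hv

lemma D_spec {n : ℕ} (hn : 2 ≤ n) {v : Linf Γ} (hv : v ∈ B.D (n - 1)) :
    IsIntF v ∧ ∀ γ ∈ B.Γs n, |v γ| ≤ B.s n := by
  rcases hv with hv | hv
  · obtain ⟨m, hm1, hmn, hw⟩ := B.exists_stage hv
    obtain ⟨hint, _, _, hbd, _⟩ := B.newpart_spec hm1 hw
    refine ⟨hint, fun γ _ => (hbd γ).trans ?_⟩
    rw [BD.s]
    exact pow_le_pow_right₀ B.one_le_lamR (by omega)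
  · obtain ⟨hint, _, hbd, _⟩ := B.C_spec hn hv
    exact ⟨hint, hbd⟩

end BD

/-- Lemma 10 (`lemmamain`): the value of `Ψ_{n,i₁}` at `x_{i₂}` for `i₁ < i₂`,
expressed via the truncation level `M(i₁,i₂)`. -/
theorem Psi_apply_x (B : BD Γ) (n : ℕ) (hn : 2 ≤ n)
    (y : ℕ → Linf Γ) (hy0 : y 0 = 0) (hyinj : Function.Injective y)
    (hyrange : Set.range y =
      quant '' {z : Linf Γ | ∀ γ ∉ B.Γs n \ B.Γs (n - 1), z γ = 0})
    (hymono : ∀ j₁ j₂, j₁ ≤ j₂ → ‖y j₁‖ ≤ ‖y j₂‖)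
    (kn : ℕ) (d : ℕ → Linf Γ)
    (hd_inj : Set.InjOn d (Set.Icc 1 kn))
    (hd_range : d '' Set.Icc 1 kn = B.D (n - 1))
    (I : ℕ) (e : ℕ → ℕ × ℕ)
    (he_mem : ∀ i, 1 ≤ i → i ≤ I → 1 ≤ (e i).1 ∧ 1 ≤ (e i).2 ∧ (e i).2 ≤ kn ∧
      restr (B.Γs n \ B.Γs (n - 1)) (d (e i).2) + y (e i).1 ∈
        quant '' suppBall (B.Γs n \ B.Γs (n - 1)) (B.s n))
    (he_surj : ∀ p : ℕ × ℕ, 1 ≤ p.1 → 1 ≤ p.2 → p.2 ≤ kn →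
      restr (B.Γs n \ B.Γs (n - 1)) (d p.2) + y p.1 ∈
        quant '' suppBall (B.Γs n \ B.Γs (n - 1)) (B.s n) →
      ∃ i, 1 ≤ i ∧ i ≤ I ∧ e i = p)
    (he_lex : ∀ i₁ i₂, 1 ≤ i₁ → i₁ < i₂ → i₂ ≤ I →
      (e i₁).1 < (e i₂).1 ∨ ((e i₁).1 = (e i₂).1 ∧ (e i₁).2 < (e i₂).2))
    (x : ℕ → Linf Γ)
    (hx : ∀ i, 1 ≤ i → i ≤ I → x i ∈ B.M n ∧
      restr (B.Γs n) (x i) =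
        restr (B.Γs (n - 1)) (d (e i).2) +
          restr (B.Γs n \ B.Γs (n - 1)) (d (e i).2) + y (e i).1)
    (hx_range : x '' Set.Icc 1 I = B.M n \ B.D (n - 1))
    (ψ : ℕ → Linf Γ → Linf Γ)
    (hψ_val : ∀ i, 1 ≤ i → i ≤ I → ψ i (x i) ∈ B.M n ∧
      restr (B.Γs n) (ψ i (x i)) =
        restr (B.Γs (n - 1)) (d (e i).2) +
          restr (B.Γs n \ B.Γs (n - 1)) (d (e i).2) +
          trunc (‖y (e i).1‖ - 1) (y (e i).1))
    (hψ_id : ∀ i, 1 ≤ i → i ≤ I →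
      ∀ z ∈ B.D (n - 1) ∪ x '' Set.Icc 1 (i - 1), ψ i z = z)
    (T : ℕ → Linf Γ → Linf Γ)
    (hT_val : ∀ j, 1 ≤ j → T j (y j) = trunc (‖y j‖ - 1) (y j))
    (hT_id : ∀ j k, k < j → T j (y k) = y k)
    (mfun : ℕ → ℕ → ℕ)
    (hm : ∀ j' j, j' < j → chain T j' j (y j) = trunc ((mfun j j' : ℕ) : ℝ) (y j))
    (i₁ i₂ : ℕ) (hi₁ : 1 ≤ i₁) (h12 : i₁ < i₂) (hi₂ : i₂ ≤ I) :
    chain ψ i₁ I (x i₂) ∈ B.M n ∧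
    restr (B.Γs n) (chain ψ i₁ I (x i₂)) =
      restr (B.Γs (n - 1)) (d (e i₂).2) +
        restr (B.Γs n \ B.Γs (n - 1)) (d (e i₂).2) +
        trunc (((if (e i₂).2 ≤ (e i₁).2 then mfun (e i₂).1 (e i₁).1
            else mfun (e i₂).1 ((e i₁).1 - 1)) : ℕ) : ℝ) (y (e i₂).1) := by
  have hn1 : 1 ≤ n - 1 := by omega
  have hsubn : B.Γs (n - 1) ⊆ B.Γs n := B.Γs_subset hn1 (by omega)
  have hΔsub : B.Γs n \ B.Γs (n - 1) ⊆ B.Γs n := Set.diff_subset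
  -- facts about y
  have hy_mem : ∀ j, y j ∈ quant '' {z : Linf Γ | ∀ γ ∉ B.Γs n \ B.Γs (n - 1), z γ = 0} :=
    fun j => hyrange ▸ Set.mem_range_self j
  have hy_int : ∀ j, IsIntF (y j) := by
    intro j
    obtain ⟨z, _, hq⟩ := hy_mem j
    rw [← hq]
    exact isIntF_quant z
  have hy_supp : ∀ j, ∀ γ ∉ B.Γs n \ B.Γs (n - 1), y j γ = 0 := by
    intro j γ hγ
    obtain ⟨z, hz, hq⟩ := hy_mem j
    rw [← hq, quant_apply, hz γ hγ, ent_zero]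
  have hy_norm1 : ∀ κ, 1 ≤ κ → (1 : ℝ) ≤ ‖y κ‖ := by
    intro κ hκ
    have hyne : y κ ≠ 0 := by
      intro h0
      have := hyinj (h0.trans hy0.symm)
      omega
    obtain ⟨k, hk⟩ := isIntF_norm (hy_int κ)
    have hk1 : 1 ≤ k := by
      by_contra hc
      have hk0 : k = 0 := by omega
      rw [hk0] at hk
      norm_num at hk
      exact hyne hk
    rw [hk]
    exact_mod_cast hk1
  have hy_trunc : ∀ κ, 1 ≤ κ → ∃ κ', κ' < κ ∧ y κ' = trunc (‖y κ‖ - 1) (y κ) := by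
    intro κ hκ
    obtain ⟨k, hk⟩ := isIntF_norm (hy_int κ)
    have hs0 : (0 : ℝ) ≤ ‖y κ‖ - 1 := by linarith [hy_norm1 κ hκ]
    have hsint : ∃ a : ℤ, ‖y κ‖ - 1 = (a : ℝ) := ⟨(k : ℤ) - 1, by rw [hk]; push_cast; ring⟩
    have htint : IsIntF (trunc (‖y κ‖ - 1) (y κ)) := by
      intro γ
      rw [trunc_apply]
      exact truncFun_isInt hsint (hy_int κ γ)
    have htsupp : ∀ γ ∉ B.Γs n \ B.Γs (n - 1), trunc (‖y κ‖ - 1) (y κ) γ = 0 := by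
      intro γ hγ
      rw [trunc_apply, hy_supp κ γ hγ, truncFun_zero]
    have hmem : trunc (‖y κ‖ - 1) (y κ) ∈ Set.range y := by
      rw [hyrange]
      exact ⟨trunc (‖y κ‖ - 1) (y κ), htsupp, quant_eq_self htint⟩
    obtain ⟨κ', hκ'⟩ := hmem
    refine ⟨κ', ?_, hκ'⟩
    by_contra hc
    push_neg at hc
    have h1 : ‖y κ‖ ≤ ‖y κ'‖ := hymono κ κ' hc
    have h2 : ‖y κ'‖ ≤ ‖y κ‖ - 1 := by
      rw [hκ']
      apply (BoundedContinuousFunction.norm_le hs0).mpr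
      intro γ
      rw [Real.norm_eq_abs, trunc_apply]
      exact abs_truncFun_le_level hs0 _
    linarith
  -- index components
  have hi₂1 : 1 ≤ i₂ := by omega
  obtain ⟨hj₂1, hk₂1, hk₂kn⟩ : 1 ≤ (e i₂).1 ∧ 1 ≤ (e i₂).2 ∧ (e i₂).2 ≤ kn :=
    ⟨(he_mem i₂ hi₂1 hi₂).1, (he_mem i₂ hi₂1 hi₂).2.1, (he_mem i₂ hi₂1 hi₂).2.2.1⟩
  have hdk₂D : d (e i₂).2 ∈ B.D (n - 1) := by
    rw [← hd_range]
    exact ⟨(e i₂).2, Set.mem_Icc.mpr ⟨hk₂1, hk₂kn⟩, rfl⟩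
  obtain ⟨hdint, hdbd⟩ := B.D_spec hn hdk₂D
  -- splitting of the restriction of d k₂
  have hA : restr (B.Γs n) (d (e i₂).2) =
      restr (B.Γs (n - 1)) (d (e i₂).2) + restr (B.Γs n \ B.Γs (n - 1)) (d (e i₂).2) := by
    apply BoundedContinuousFunction.ext
    intro γ
    rw [BoundedContinuousFunction.add_apply]
    by_cases h1 : γ ∈ B.Γs (n - 1)
    · rw [restr_apply_of_mem _ (hsubn h1), restr_apply_of_mem _ h1,
        restr_apply_of_not_mem _ (fun hc => hc.2 h1)]
      ring
    · by_cases h2 : γ ∈ B.Γs n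
      · rw [restr_apply_of_mem _ h2, restr_apply_of_not_mem _ h1,
          restr_apply_of_mem (S := B.Γs n \ B.Γs (n - 1)) _ ⟨h2, h1⟩]
        ring
      · rw [restr_apply_of_not_mem _ h2, restr_apply_of_not_mem _ h1,
          restr_apply_of_not_mem _ (fun hc => h2 hc.1)]
        ring
  -- threshold function
  set jthr : ℕ → ℕ := fun i => if (e i₂).2 ≤ (e i).2 then (e i).1 else (e i).1 - 1 with hjthr
  have j_le_j₂ : ∀ i, 1 ≤ i → i ≤ i₂ → (e i).1 ≤ (e i₂).1 := by
    intro i h1 h2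
    rcases eq_or_lt_of_le h2 with rfl | h
    · exact le_rfl
    · rcases he_lex i i₂ h1 h hi₂ with h' | ⟨h', _⟩ <;> omega
  have jthr_le : ∀ i, jthr i ≤ (e i).1 := by
    intro i
    simp only [hjthr]
    split_ifs <;> omega
  have jthr_mono : ∀ a b, 1 ≤ a → a ≤ b → b ≤ I → jthr a ≤ jthr b := by
    intro a b h1 hab hbI
    rcases eq_or_lt_of_le hab with rfl | hlt
    · exact le_rfl
    · rcases he_lex a b h1 hlt hbI with h | ⟨h, h'⟩ <;>
        (simp only [hjthr]; split_ifs <;> omega)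
  have le_jthr : ∀ a b, 1 ≤ a → a ≤ b → b ≤ I → (e a).2 = (e i₂).2 → (e a).1 ≤ jthr b := by
    intro a b h1 hab hbI h2
    rcases eq_or_lt_of_le hab with rfl | hlt
    · simp only [hjthr]
      split_ifs <;> omega
    · rcases he_lex a b h1 hlt hbI with h | ⟨h, h'⟩ <;>
        (simp only [hjthr]; split_ifs <;> omega)
  have jthr_le_pred : ∀ a b, 1 ≤ a → a < b → b ≤ I → (e b).2 = (e i₂).2 →
      jthr a ≤ (e b).1 - 1 := by
    intro a b h1 hab hbI h2
    rcases he_lex a b h1 hab hbI with h | ⟨h, h'⟩ <;>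
      (simp only [hjthr]; split_ifs <;> omega)
  -- the element Y c
  set Y : ℕ → Linf Γ := fun c => chain T c (e i₂).1 (y (e i₂).1) with hY
  have hYj₂ : Y (e i₂).1 = y (e i₂).1 := by
    simp only [hY]
    exact chain_id T _ _ _ (fun t ht1 ht2 => absurd (lt_of_lt_of_le ht1 ht2) (lt_irrefl _))
  have hYstep : ∀ c, c < (e i₂).1 → Y c = T (c + 1) (Y (c + 1)) := by
    intro c hc
    simp only [hY]
    rw [chain_succ_left T hc]
    rfl
  have Ydown : ∀ δ c κ', c + δ ≤ (e i₂).1 → Y (c + δ) = y κ' → κ' ≤ c → Y c = y κ' := by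
    intro δ
    induction δ with
    | zero =>
        intro c κ' _ h _
        simpa using h
    | succ δ ih =>
        intro c κ' hle hYv hκ'
        have h1 : Y (c + δ) = y κ' := by
          have hstep : Y (c + δ) = T (c + δ + 1) (Y (c + δ + 1)) := hYstep _ (by omega)
          rw [show c + (δ + 1) = c + δ + 1 by omega] at hYv
          rw [hstep, hYv, hT_id _ κ' (by omega)]
        exact ih c κ' (by omega) h1 hκ'
  -- main downward induction
  have key : ∀ δ : ℕ, i₁ + δ ≤ i₂ →
      (∃ i', 1 ≤ i' ∧ i' ≤ i₂ - δ ∧ chain ψ (i₂ - δ) I (x i₂) = x i' ∧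
        (e i').2 = (e i₂).2 ∧ y (e i').1 = Y (jthr (i₂ - δ))) ∨
      (chain ψ (i₂ - δ) I (x i₂) = d (e i₂).2 ∧ chain ψ (i₂ - δ) I (x i₂) ∈ B.M n ∧
        Y (jthr (i₂ - δ)) = 0) := by
    intro δ
    induction δ with
    | zero =>
        intro _
        simp only [Nat.sub_zero]
        left
        refine ⟨i₂, hi₂1, le_rfl, ?_, rfl, ?_⟩
        · exact chain_id ψ i₂ I (x i₂) (fun t ht1 ht2 =>
            hψ_id t (by omega) ht2 (x i₂)
              (Or.inr ⟨i₂, Set.mem_Icc.mpr ⟨hi₂1, by omega⟩, rfl⟩))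
        · have hjt : jthr i₂ = (e i₂).1 := by
            simp only [hjthr]
            split_ifs <;> omega
          rw [hjt, hYj₂]
    | succ δ ih =>
        intro hδ
        have hIH := ih (by omega)
        have hi_lb : i₁ + 1 ≤ i₂ - δ := by omega
        have hi_ub : i₂ - δ ≤ i₂ := by omega
        set i : ℕ := i₂ - δ with hidef
        have hieq : i₂ - (δ + 1) = i - 1 := by omega
        rw [hieq]
        have hiI : i ≤ I := by omega
        have hi1 : 1 ≤ i := by omega
        have hstep : chain ψ (i - 1) I (x i₂) = ψ i (chain ψ i I (x i₂)) := by
          rw [chain_succ_left ψ (show i - 1 < I by omega)]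
          rw [show i - 1 + 1 = i by omega]
          rfl
        rcases hIH with ⟨i', h1, h2, h3, h4, h5⟩ | ⟨h1, h2, h3⟩
        · -- current point is x i'
          rcases eq_or_lt_of_le h2 with heq | hlt
          · -- i' = i : apply ψ i to x i
            rw [heq] at h1 h3 h4 h5
            have hκ1 : 1 ≤ (e i).1 := (he_mem i (by omega) hiI).1
            obtain ⟨κ', hκ'lt, hκ'eq⟩ := hy_trunc (e i).1 hκ1
            have hval := hψ_val i (by omega) hiI
            have hp1 : ψ i (chain ψ i I (x i₂)) ∈ B.M n := by
              rw [h3]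
              exact hval.1
            have hpr : restr (B.Γs n) (ψ i (chain ψ i I (x i₂))) =
                restr (B.Γs (n - 1)) (d (e i₂).2) +
                  restr (B.Γs n \ B.Γs (n - 1)) (d (e i₂).2) + y κ' := by
              rw [h3, hval.2, h4, ← hκ'eq]
            have hκj₂ : (e i).1 ≤ (e i₂).1 := j_le_j₂ i (by omega) hi_ub
            have hYκ : Y (e i).1 = y (e i).1 := by
              have hjt : jthr i = (e i).1 := by
                simp only [hjthr]
                split_ifs <;> omega
              rw [hjt] at h5
              exact h5.symm
            have hYκ1 : Y ((e i).1 - 1) = y κ' := by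
              rw [hYstep ((e i).1 - 1) (by omega), show (e i).1 - 1 + 1 = (e i).1 by omega,
                hYκ, hT_val (e i).1 hκ1, ← hκ'eq]
            have hjthr_pred : jthr (i - 1) ≤ (e i).1 - 1 :=
              jthr_le_pred (i - 1) i (by omega) (by omega) hiI h4
            rcases Nat.eq_zero_or_pos κ' with hκ'0 | hκ'pos
            · -- truncated to 0 : the point becomes d k₂
              right
              have hprd : restr (B.Γs n) (ψ i (chain ψ i I (x i₂))) =
                  restr (B.Γs n) (d (e i₂).2) := by
                rw [hpr, hκ'0, hy0, add_zero, ← hA]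
              have hpd : ψ i (chain ψ i I (x i₂)) = d (e i₂).2 :=
                B.restr_inj hn (Or.inl hp1) (B.D_subset_MC hn hdk₂D) hprd
              refine ⟨by rw [hstep, hpd], by rw [hstep]; exact hp1, ?_⟩
              have hY0 : Y (jthr (i - 1)) = y 0 := by
                refine Ydown ((e i).1 - 1 - jthr (i - 1)) (jthr (i - 1)) 0 (by omega) ?_
                  (by omega)
                rw [show jthr (i - 1) + ((e i).1 - 1 - jthr (i - 1)) = (e i).1 - 1 by omega,
                  hYκ1, hκ'0]
              rw [hY0, hy0]
            · -- truncated to a nonzero y κ' : the point becomes x i₃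
              have hball := (he_mem i (by omega) hiI).2.2.2
              rw [h4] at hball
              obtain ⟨hbint, hbsupp, hbbd⟩ := quant_suppBall_prop hball
              have hs0 : (0 : ℝ) ≤ ‖y (e i).1‖ - 1 := by linarith [hy_norm1 (e i).1 hκ1]
              have hball' : restr (B.Γs n \ B.Γs (n - 1)) (d (e i₂).2) + y κ' ∈
                  quant '' suppBall (B.Γs n \ B.Γs (n - 1)) (B.s n) := by
                apply mem_quant_suppBall
                · exact isIntF_add (isIntF_restr _ hdint) (hy_int κ')
                · intro γ hγ
                  rw [BoundedContinuousFunction.add_apply, restr_apply_of_not_mem _ hγ,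
                    hy_supp κ' γ hγ, add_zero]
                · apply (BoundedContinuousFunction.norm_le (B.s_nonneg n)).mpr
                  intro γ
                  rw [Real.norm_eq_abs, BoundedContinuousFunction.add_apply]
                  by_cases hγ : γ ∈ B.Γs n \ B.Γs (n - 1)
                  · rw [restr_apply_of_mem _ hγ, hκ'eq, trunc_apply]
                    refine (abs_add_truncFun_le hs0 _ _).trans (max_le ?_ ?_)
                    · exact hdbd γ (hΔsub hγ)
                    · have hbb := hbbd γ
                      rw [BoundedContinuousFunction.add_apply, restr_apply_of_mem _ hγ] at hbb
                      exact hbb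
                  · rw [restr_apply_of_not_mem _ hγ, hy_supp κ' γ hγ, add_zero, abs_zero]
                    exact B.s_nonneg n
              obtain ⟨i₃, hi₃1, hi₃I, hi₃e⟩ :=
                he_surj (κ', (e i₂).2) hκ'pos hk₂1 hk₂kn hball'
              have he₃1 : (e i₃).1 = κ' := by rw [hi₃e]
              have he₃2 : (e i₃).2 = (e i₂).2 := by rw [hi₃e]
              have hx₃ := hx i₃ hi₃1 hi₃I
              have hrx₃ : restr (B.Γs n) (x i₃) =
                  restr (B.Γs (n - 1)) (d (e i₂).2) +
                    restr (B.Γs n \ B.Γs (n - 1)) (d (e i₂).2) + y κ' := by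
                rw [hx₃.2, he₃1, he₃2]
              have hpx : ψ i (chain ψ i I (x i₂)) = x i₃ :=
                B.restr_inj hn (Or.inl hp1) (Or.inl hx₃.1) (by rw [hpr, hrx₃])
              have hi₃lt : i₃ < i := by
                rcases lt_trichotomy i₃ i with h | h | h
                · exact h
                · exfalso
                  rw [h] at he₃1
                  omega
                · exfalso
                  rcases he_lex i i₃ (by omega) h hi₃I with hl | ⟨hl, _⟩ <;>
                    rw [he₃1] at hl <;> omega
              left
              refine ⟨i₃, hi₃1, by omega, by rw [hstep, hpx], he₃2, ?_⟩
              have hκ'le : κ' ≤ jthr (i - 1) := by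
                have hlj := le_jthr i₃ (i - 1) hi₃1 (by omega) (by omega) he₃2
                rw [he₃1] at hlj
                exact hlj
              rw [he₃1]
              exact (Ydown ((e i).1 - 1 - jthr (i - 1)) (jthr (i - 1)) κ' (by omega)
                (by rw [show jthr (i - 1) + ((e i).1 - 1 - jthr (i - 1)) =
                    (e i).1 - 1 by omega, hYκ1]) hκ'le).symm
          · -- i' < i : ψ i fixes x i'
            have hfix : ψ i (chain ψ i I (x i₂)) = chain ψ i I (x i₂) :=
              hψ_id i (by omega) hiI _
                (Or.inr ⟨i', Set.mem_Icc.mpr ⟨h1, by omega⟩, h3.symm⟩)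
            left
            refine ⟨i', h1, by omega, by rw [hstep, hfix, h3], h4, ?_⟩
            have hκ'le : (e i').1 ≤ jthr (i - 1) := le_jthr i' (i - 1) h1 (by omega) (by omega) h4
            have hmono : jthr (i - 1) ≤ jthr i := jthr_mono (i - 1) i (by omega) (by omega) hiI
            have hjle : jthr i ≤ (e i₂).1 := by
              refine (jthr_le i).trans (j_le_j₂ i (by omega) hi_ub)
            exact (Ydown (jthr i - jthr (i - 1)) (jthr (i - 1)) (e i').1 (by omega)
              (by rw [show jthr (i - 1) + (jthr i - jthr (i - 1)) = jthr i by omega]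
                  exact h5.symm) hκ'le).symm
        · -- current point is d k₂
          have hfix : ψ i (chain ψ i I (x i₂)) = chain ψ i I (x i₂) :=
            hψ_id i (by omega) hiI _ (Or.inl (h1 ▸ hdk₂D))
          right
          refine ⟨by rw [hstep, hfix, h1], by rw [hstep, hfix]; exact h2, ?_⟩
          have hmono : jthr (i - 1) ≤ jthr i := jthr_mono (i - 1) i (by omega) (by omega) hiI
          have hjle : jthr i ≤ (e i₂).1 := (jthr_le i).trans (j_le_j₂ i (by omega) hi_ub)
          have hY0 : Y (jthr (i - 1)) = y 0 := by
            refine Ydown (jthr i - jthr (i - 1)) (jthr (i - 1)) 0 (by omega) ?_ (by omega)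
            rw [show jthr (i - 1) + (jthr i - jthr (i - 1)) = jthr i by omega, h3, hy0]
          rw [hY0, hy0]
  -- assemble the conclusion
  have hfinkey := key (i₂ - i₁) (by omega)
  rw [show i₂ - (i₂ - i₁) = i₁ by omega] at hfinkey
  have hjlt : jthr i₁ < (e i₂).1 := by
    rcases he_lex i₁ i₂ hi₁ h12 hi₂ with h | ⟨h, h'⟩ <;>
      (simp only [hjthr]; split_ifs <;> omega)
  have hfinal : Y (jthr i₁) =
      trunc (((if (e i₂).2 ≤ (e i₁).2 then mfun (e i₂).1 (e i₁).1
        else mfun (e i₂).1 ((e i₁).1 - 1)) : ℕ) : ℝ) (y (e i₂).1) := by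
    have hmm : Y (jthr i₁) = trunc ((mfun (e i₂).1 (jthr i₁) : ℕ) : ℝ) (y (e i₂).1) := by
      simp only [hY]
      exact hm (jthr i₁) (e i₂).1 hjlt
    rw [hmm]
    congr 2
    simp only [hjthr]
    split_ifs <;> rfl
  rcases hfinkey with ⟨i', h1, h2, h3, h4, h5⟩ | ⟨h1, h2, h3⟩
  · constructor
    · rw [h3]
      exact (hx i' h1 (by omega)).1
    · rw [h3, (hx i' h1 (by omega)).2, h4, h5, hfinal]
  · refine ⟨h2, ?_⟩
    rw [h1, ← hfinal, h3, add_zero, ← hA]
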